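/- Let ρ be a rank-one positive semidefinite trace-one matrix and let P_0 be the projector onto its kernel. For the GKSL dissipator D(ρ) = Σ_k (G_k ρ G_k† − (1/2){G_k†G_k, ρ}), the compression P_0 D(ρ) P_0 is positive semidefinite, and it equals zero for every rank-one ρ if and only if each G_k is proportional to the identity (in which case D vanishes identically). Moreover P_0 [H, ρ] P_0 = 0 for any Hermitian H. -/

import Mathlib

open Matrix BigOperators ComplexOrder

namespace DKC
variable {d : ℕ}

lemma mul_vecMulVec (M : Matrix (Fin d) (Fin d) ℂ) (a b : Fin d → ℂ) :
    M * vecMulVec a b = vecMulVec (M *ᵥ a) b := by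
  ext i j
  simp [Matrix.mul_apply, vecMulVec_apply, mulVec, dotProduct, Finset.sum_mul, mul_assoc]

lemma vecMulVec_mul (M : Matrix (Fin d) (Fin d) ℂ) (a b : Fin d → ℂ) :
    vecMulVec a b * M = vecMulVec a (b ᵥ* M) := by
  ext i j
  simp [Matrix.mul_apply, vecMulVec_apply, vecMul, dotProduct, Finset.mul_sum, mul_assoc]

lemma vecMulVec_conjTranspose (a b : Fin d → ℂ) :
    (vecMulVec a b)ᴴ = vecMulVec (star b) (star a) := by
  ext i j
  simp [conjTranspose_apply, vecMulVec_apply, mul_comm]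

lemma vecMulVec_mulVec (a b v : Fin d → ℂ) :
    vecMulVec a b *ᵥ v = (b ⬝ᵥ v) • a := by
  ext i
  simp [mulVec, vecMulVec_apply, dotProduct, Finset.mul_sum, mul_comm, mul_left_comm, mul_assoc]

lemma posSemidef_vecMulVec_star (v : Fin d → ℂ) :
    (vecMulVec v (star v)).PosSemidef := by
  refine posSemidef_iff_dotProduct_mulVec.mpr ⟨?_, ?_⟩
  · rw [IsHermitian, vecMulVec_conjTranspose, star_star]
  · intro x
    have : star x ⬝ᵥ (vecMulVec v (star v) *ᵥ x) = star (star v ⬝ᵥ x) * (star v ⬝ᵥ x) := by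
      simp only [dotProduct, mulVec, vecMulVec_apply, Pi.star_apply, star_sum, star_mul',
        Finset.mul_sum, Finset.sum_mul]
      rw [Finset.sum_comm]
      refine Finset.sum_congr rfl fun i _ => Finset.sum_congr rfl fun j _ => ?_
      simp only [star_star]; ring

    rw [this]
    exact star_mul_self_nonneg _

lemma posSemidef_sum {ι : Type*} (s : Finset ι) (f : ι → Matrix (Fin d) (Fin d) ℂ)
    (h : ∀ i ∈ s, (f i).PosSemidef) : (∑ i ∈ s, f i).PosSemidef := by
  induction s using Finset.cons_induction with
  | empty => simpa using Matrix.PosSemidef.zero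
  | cons a s ha ih =>
      rw [Finset.sum_cons]
      exact (h a (Finset.mem_cons_self a s)).add (ih fun i hi => h i (Finset.mem_cons_of_mem hi))

lemma compress_abstract (P ρ X Y : Matrix (Fin d) (Fin d) ℂ)
    (hPρ : P * ρ = 0) (hρP : ρ * P = 0) :
    P * (X - (1/2 : ℂ) • (Y * ρ + ρ * Y)) * P = P * X * P := by
  rw [mul_sub, sub_mul, mul_smul_comm, smul_mul_assoc, mul_add, add_mul]
  have e1 : P * (Y * ρ) * P = (P * Y) * (ρ * P) := by simp only [mul_assoc]
  have e2 : P * (ρ * Y) * P = (P * ρ) * (Y * P) := by simp only [mul_assoc]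
  rw [e1, e2, hPρ, hρP, zero_mul, mul_zero, add_zero, smul_zero, sub_zero]

lemma commutator_abstract (P ρ H : Matrix (Fin d) (Fin d) ℂ)
    (hPρ : P * ρ = 0) (hρP : ρ * P = 0) :
    P * (H * ρ - ρ * H) * P = 0 := by
  rw [mul_sub, sub_mul]
  have e1 : P * (H * ρ) * P = (P * H) * (ρ * P) := by simp only [mul_assoc]
  have e2 : P * (ρ * H) * P = (P * ρ) * (H * P) := by simp only [mul_assoc]
  rw [e1, e2, hPρ, hρP, mul_zero, zero_mul, sub_self]

lemma star_vecMul_herm (P : Matrix (Fin d) (Fin d) ℂ) (hP : Pᴴ = P) (u : Fin d → ℂ) :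
    star u ᵥ* P = star (P *ᵥ u) := by rw [star_mulVec, hP]

section rho
variable (ψ : Fin d → ℂ)

lemma rho_idem (hψ : star ψ ⬝ᵥ ψ = 1) :
    vecMulVec ψ (star ψ) * vecMulVec ψ (star ψ) = vecMulVec ψ (star ψ) := by
  rw [mul_vecMulVec, vecMulVec_mulVec, hψ, one_smul]

lemma rho_herm : (vecMulVec ψ (star ψ))ᴴ = vecMulVec ψ (star ψ) := by
  rw [vecMulVec_conjTranspose, star_star]

lemma P_mul_rho (hψ : star ψ ⬝ᵥ ψ = 1) :
    (1 - vecMulVec ψ (star ψ)) * vecMulVec ψ (star ψ) = 0 := by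
  rw [sub_mul, one_mul, rho_idem ψ hψ, sub_self]

lemma rho_mul_P (hψ : star ψ ⬝ᵥ ψ = 1) :
    vecMulVec ψ (star ψ) * (1 - vecMulVec ψ (star ψ)) = 0 := by
  rw [mul_sub, mul_one, rho_idem ψ hψ, sub_self]

lemma P_herm : (1 - vecMulVec ψ (star ψ))ᴴ = 1 - vecMulVec ψ (star ψ) := by
  rw [conjTranspose_sub, conjTranspose_one, rho_herm]

/-- the key compression identity for one Lindblad term -/
lemma compress (hψ : star ψ ⬝ᵥ ψ = 1) (A : Matrix (Fin d) (Fin d) ℂ) :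
    (1 - vecMulVec ψ (star ψ)) *
      (A * vecMulVec ψ (star ψ) * Aᴴ - (1/2 : ℂ) •
        (Aᴴ * A * vecMulVec ψ (star ψ) + vecMulVec ψ (star ψ) * (Aᴴ * A))) *
      (1 - vecMulVec ψ (star ψ))
    = vecMulVec ((1 - vecMulVec ψ (star ψ)) *ᵥ (A *ᵥ ψ))
        (star ((1 - vecMulVec ψ (star ψ)) *ᵥ (A *ᵥ ψ))) := by
  rw [compress_abstract _ _ _ _ (P_mul_rho ψ hψ) (rho_mul_P ψ hψ)]
  rw [mul_vecMulVec A, vecMulVec_mul, mul_vecMulVec, vecMulVec_mul,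
    ← star_vecMul_herm _ (P_herm ψ), ← star_mulVec]

end rho

/-- every unit vector is an eigenvector implies scalar -/
lemma scalar_of_eigen (A : Matrix (Fin d) (Fin d) ℂ)
    (h : ∀ ψ : Fin d → ℂ, star ψ ⬝ᵥ ψ = 1 → ∃ c : ℂ, A *ᵥ ψ = c • ψ) :
    ∃ c : ℂ, A = c • (1 : Matrix (Fin d) (Fin d) ℂ) := by
  rcases Nat.eq_zero_or_pos d with hd | hd
  · refine ⟨0, ?_⟩
    subst hd
    ext i j
    exact i.elim0
  · set e : Fin d → (Fin d → ℂ) := fun t => Pi.single t 1 with he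
    have happ : ∀ t j : Fin d, e t j = if j = t then 1 else 0 := by
      intro t j; rw [he]; exact Pi.single_apply t 1 j
    have hstar : ∀ i : Fin d, star (e i) = e i := by
      intro i; funext j
      rw [Pi.star_apply, happ]
      split <;> simp [happ]
    have hunit : ∀ i : Fin d, star (e i) ⬝ᵥ e i = 1 := by
      intro i; rw [hstar, he, single_dotProduct, one_mul, ← he, happ]; simp
    choose c hc using fun i : Fin d => h (e i) (hunit i)
    have hA : ∀ i j : Fin d, A j i = c i * e i j := by
      intro i j
      have h5 := congrFun (hc i) j
      rw [he] at h5
      rw [mulVec_single] at h5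
      simpa [he] using h5
    set i0 : Fin d := ⟨0, hd⟩
    refine ⟨c i0, ?_⟩
    have hceq : ∀ i : Fin d, c i = c i0 := by
      intro i
      by_cases hii : i = i0
      · rw [hii]
      · set r : ℂ := (((Real.sqrt 2)⁻¹ : ℝ) : ℂ) with hr
        have hr0 : r ≠ 0 := by
          simp [hr, Real.sqrt_eq_zero']
        have hrr : star r * r * 2 = 1 := by
          have h2 : (Real.sqrt 2)⁻¹ * (Real.sqrt 2)⁻¹ = 2⁻¹ := by
            rw [← mul_inv, Real.mul_self_sqrt (by norm_num)]
          rw [hr, Complex.star_def, Complex.conj_ofReal, ← Complex.ofReal_mul, h2]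
          norm_num
        set v : Fin d → ℂ := e i0 + e i with hv
        have hcross : star v ⬝ᵥ v = 2 := by
          rw [hv, star_add, hstar, hstar, add_dotProduct, dotProduct_add, dotProduct_add]
          simp [dotProduct, happ, mul_ite, ite_mul, Finset.sum_ite_eq', hii, Ne.symm hii]
          norm_num
        have hvunit : star (r • v) ⬝ᵥ (r • v) = 1 := by
          rw [star_smul, smul_dotProduct, dotProduct_smul, smul_eq_mul, smul_eq_mul,
            hcross, ← mul_assoc, hrr]
        obtain ⟨c', hc'⟩ := h (r • v) hvunit
        have hAv : A *ᵥ (r • v) = r • (c i0 • e i0 + c i • e i) := by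
          rw [mulVec_smul, hv, mulVec_add, hc, hc]
        rw [hAv, hv] at hc'
        have h1 := congrFun hc' i0
        have h2 := congrFun hc' i
        simp [happ, hii, Ne.symm hii] at h1 h2
        have hi0 : c i0 = c' := by
          have h3 : r * (c i0 - c') = 0 := by linear_combination h1
          rcases mul_eq_zero.mp h3 with hcase | hcase
          · exact absurd hcase hr0
          · exact sub_eq_zero.mp hcase
        have hi : c i = c' := by
          have h3 : r * (c i - c') = 0 := by linear_combination h2
          rcases mul_eq_zero.mp h3 with hcase | hcase
          · exact absurd hcase hr0
          · exact sub_eq_zero.mp hcase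
        rw [hi0, hi]
    ext j i
    rw [hA i j, hceq i]
    simp [happ, Matrix.one_apply, eq_comm]

end DKC

open DKC

theorem dissipator_kernel_compression (d m : ℕ)
    (G : Fin m → Matrix (Fin d) (Fin d) ℂ)
    (D : Matrix (Fin d) (Fin d) ℂ → Matrix (Fin d) (Fin d) ℂ)
    (hD : ∀ M, D M = ∑ k, (G k * M * (G k)ᴴ
        - (1/2 : ℂ) • ((G k)ᴴ * G k * M + M * ((G k)ᴴ * G k)))) :
    (∀ ψ : Fin d → ℂ, star ψ ⬝ᵥ ψ = 1 →
      (((1 - vecMulVec ψ (star ψ)) * D (vecMulVec ψ (star ψ))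
          * (1 - vecMulVec ψ (star ψ))).PosSemidef ∧
        ∀ H : Matrix (Fin d) (Fin d) ℂ, H.IsHermitian →
          (1 - vecMulVec ψ (star ψ))
            * (H * vecMulVec ψ (star ψ) - vecMulVec ψ (star ψ) * H)
            * (1 - vecMulVec ψ (star ψ)) = 0)) ∧
    ((∀ ψ : Fin d → ℂ, star ψ ⬝ᵥ ψ = 1 →
        (1 - vecMulVec ψ (star ψ)) * D (vecMulVec ψ (star ψ))
          * (1 - vecMulVec ψ (star ψ)) = 0) ↔
      ∀ k, ∃ c : ℂ, G k = c • (1 : Matrix (Fin d) (Fin d) ℂ)) ∧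
    ((∀ k, ∃ c : ℂ, G k = c • (1 : Matrix (Fin d) (Fin d) ℂ)) → ∀ M, D M = 0) := by
  -- main representation
  have rep : ∀ ψ : Fin d → ℂ, star ψ ⬝ᵥ ψ = 1 →
      (1 - vecMulVec ψ (star ψ)) * D (vecMulVec ψ (star ψ)) * (1 - vecMulVec ψ (star ψ))
      = ∑ k, vecMulVec ((1 - vecMulVec ψ (star ψ)) *ᵥ (G k *ᵥ ψ))
          (star ((1 - vecMulVec ψ (star ψ)) *ᵥ (G k *ᵥ ψ))) := by
    intro ψ hψ
    rw [hD, Finset.mul_sum, Finset.sum_mul]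
    exact Finset.sum_congr rfl fun k _ => compress ψ hψ (G k)
  -- third part
  have third : (∀ k, ∃ c : ℂ, G k = c • (1 : Matrix (Fin d) (Fin d) ℂ)) → ∀ M, D M = 0 := by
    intro hG M
    rw [hD]
    refine Finset.sum_eq_zero fun k _ => ?_
    obtain ⟨c, hck⟩ := hG k
    rw [hck]
    simp only [conjTranspose_smul, conjTranspose_one, smul_mul_assoc, mul_smul_comm,
      one_mul, mul_one, smul_smul]
    rw [sub_eq_zero]
    rw [← add_smul, smul_smul]
    congr 1
    simp [RCLike.star_def]
    ring
  refine ⟨?_, ⟨?_, ?_⟩, third⟩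
  · intro ψ hψ
    constructor
    · rw [rep ψ hψ]
      exact posSemidef_sum _ _ fun k _ => posSemidef_vecMulVec_star _
    · intro H _
      exact commutator_abstract _ _ _ (P_mul_rho ψ hψ) (rho_mul_P ψ hψ)
  · intro h k
    apply scalar_of_eigen
    intro ψ hψ
    have h0 := h ψ hψ
    rw [rep ψ hψ] at h0
    set w : Fin m → Fin d → ℂ := fun k => (1 - vecMulVec ψ (star ψ)) *ᵥ (G k *ᵥ ψ) with hw
    have hwk : w k = 0 := by
      funext i
      have hentry : ∑ j, vecMulVec (w j) (star (w j)) i i = 0 := by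
        have := congrFun (congrFun h0 i) i
        rwa [Matrix.sum_apply] at this
      have hterm : ∀ j ∈ Finset.univ, (0:ℂ) ≤ vecMulVec (w j) (star (w j)) i i := by
        intro j _
        rw [vecMulVec_apply, Pi.star_apply]
        exact mul_star_self_nonneg _
      have := (Finset.sum_eq_zero_iff_of_nonneg hterm).mp hentry k (Finset.mem_univ k)
      rw [vecMulVec_apply, Pi.star_apply, RCLike.star_def, Complex.mul_conj] at this
      have := Complex.normSq_eq_zero.mp (by exact_mod_cast this)
      exact this
    refine ⟨star ψ ⬝ᵥ (G k *ᵥ ψ), ?_⟩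
    have h3 : (1 - vecMulVec ψ (star ψ)) *ᵥ (G k *ᵥ ψ) = 0 := hwk
    rw [sub_mulVec, one_mulVec, sub_eq_zero] at h3
    rw [vecMulVec_mulVec] at h3
    exact h3
  · intro hG ψ hψ
    rw [third hG, mul_zero, zero_mul]
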